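/- arXiv:1202.3885 — 2 statements merged into one kernel-verified Lean document; each statement's English description precedes it below -/
import Mathlib

section
/- There exists an integer N₀ such that for every n ≥ N₀ the core of the n-firm game (Fin n, v^n) is nonempty; indeed, the equal-split allocation x_i = (a-c)²/(4n) satisfies Σ_{i∈S} x_i = |S|·(a-c)²/(4n) ≥ v^n(|S|) for every nonempty S ⊆ Fin n. -/
set_option maxHeartbeats 1000000


/-- Stirling number of the second kind (as a real number):
`K m j = (1/j!) · Σ_{i=0}^{j} (-1)^i · C(j,i) · (j-i)^m`. -/
noncomputable def K (m j : ℕ) : ℝ :=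
  (1 / (Nat.factorial j : ℝ)) *
    ∑ i ∈ Finset.range (j + 1), (-1 : ℝ) ^ i * (Nat.choose j i : ℝ) * ((j - i : ℕ) : ℝ) ^ m

/-- Bell number `B m = Σ_{j=1}^{m} K m j`. -/
noncomputable def B (m : ℕ) : ℝ := ∑ j ∈ Finset.Icc 1 m, K m j

/-- Uniform partition distribution: `f n s j = K (n-s) j / B (n-s)`. -/
noncomputable def f (n s j : ℕ) : ℝ := K (n - s) j / B (n - s)

/-- `F n s = Σ_{j=1}^{n-s} j · f n s j / (j+1)`. -/
noncomputable def F (n s : ℕ) : ℝ :=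
  ∑ j ∈ Finset.Icc 1 (n - s), (j : ℝ) * f n s j / ((j : ℝ) + 1)

/-- Value of a coalition of size `s` in the `n`-firm uniform-distribution game:
`v^n(n) = (a-c)²/4`, `v^n(0) = 0`, and for `1 ≤ s ≤ n-1`,
`v^n(s) = (a-c)² · (1-F)/(2-F)² · Σ_{j=1}^{n-s} f n s j / (j+1)`. -/
noncomputable def v (a c : ℝ) (n s : ℕ) : ℝ :=
  if s = n then (a - c) ^ 2 / 4
  else if s = 0 then 0
  else (a - c) ^ 2 * ((1 - F n s) / (2 - F n s) ^ 2) *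
    ∑ j ∈ Finset.Icc 1 (n - s), f n s j / ((j : ℝ) + 1)

def st : ℕ → ℕ → ℕ
  | 0, 0 => 1
  | 0, _+1 => 0
  | _+1, 0 => 0
  | m+1, j+1 => (j+1) * st m (j+1) + st m j

lemma st_eq_zero : ∀ m j : ℕ, m < j → st m j = 0
  | 0, _+1, _ => rfl
  | m+1, j+1, h => by
    have h1 : m < j + 1 := by omega
    have h2 : m < j := by omega
    simp [st, st_eq_zero m (j+1) h1, st_eq_zero m j h2]

lemma st_self : ∀ m : ℕ, st m m = 1
  | 0 => rfl
  | m+1 => by simp [st, st_eq_zero m (m+1) (by omega), st_self m]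

lemma st_le : ∀ m j : ℕ, st m j ≤ (j+1)^m
  | 0, 0 => le_refl 1
  | 0, _+1 => by simp [st]
  | m+1, 0 => by simp [st]
  | m+1, j+1 => by
    have h1 := st_le m (j+1)
    have h2 := st_le m j
    have : (j+1)^m ≤ (j+2)^m := Nat.pow_le_pow_left (by omega) m
    calc st (m+1) (j+1) = (j+1) * st m (j+1) + st m j := rfl
      _ ≤ (j+1) * (j+2)^m + (j+2)^m := by
          have h1' : st m (j+1) ≤ (j+2)^m := by simpa [show j+1+1 = j+2 from rfl] using h1
          exact Nat.add_le_add (Nat.mul_le_mul_left _ h1') (h2.trans this)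
      _ = (j+2)^(m+1) := by ring

lemma le_st (k : ℕ) (hk : 1 ≤ k) : ∀ d : ℕ, k^d ≤ st (k+d) k
  | 0 => by simp [st_self]
  | d+1 => by
    have ih := le_st k hk d
    have : k + (d+1) = (k+d) + 1 := by omega
    rw [this]
    rcases Nat.exists_eq_add_of_le hk with ⟨k', rfl⟩
    calc (1+k')^(d+1) = (1+k') * (1+k')^d := by ring
      _ ≤ (1+k') * st (1+k'+d) (1+k') := Nat.mul_le_mul_left _ ih
      _ ≤ (k'+1) * st (1+k'+d) (k'+1) + st (1+k'+d) k' := by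
          rw [Nat.add_comm 1 k']; omega
      _ = st (1+k'+d+1) (1+k') := by rw [Nat.add_comm 1 k']; rfl

lemma sum_eq_st (m j : ℕ) :
    ∑ i ∈ Finset.range (j + 1), (-1 : ℝ) ^ i * (Nat.choose j i : ℝ) * ((j - i : ℕ) : ℝ) ^ m
      = (Nat.factorial j : ℝ) * st m j := by
  induction m generalizing j with
  | zero =>
    cases j with
    | zero => simp [st]
    | succ j =>
      have h := Int.alternating_sum_range_choose (n := j+1)
      have h2 := congrArg (Int.cast : ℤ → ℝ) h
      push_cast at h2
      simp only [pow_zero, mul_one]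
      rw [st_eq_zero 0 (j+1) (by omega)]
      simpa using h2
  | succ m ih =>
    cases j with
    | zero => simp [st]
    | succ j =>
      have key : ∀ i ∈ Finset.range (j + 2),
          (-1 : ℝ) ^ i * (Nat.choose (j+1) i : ℝ) * ((j + 1 - i : ℕ) : ℝ) ^ (m+1)
          = ((j:ℝ)+1) * ((-1 : ℝ) ^ i * (Nat.choose (j+1) i : ℝ) * ((j + 1 - i : ℕ) : ℝ) ^ m)
            - (i : ℝ) * ((-1 : ℝ) ^ i * (Nat.choose (j+1) i : ℝ) * ((j + 1 - i : ℕ) : ℝ) ^ m) := by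
        intro i hi
        have hij : i ≤ j + 1 := by simpa [Nat.lt_succ_iff] using hi
        have hcast : ((j + 1 - i : ℕ) : ℝ) = ((j:ℝ) + 1) - (i:ℝ) := by
          push_cast [Nat.cast_sub hij]; ring
        rw [pow_succ]
        nth_rewrite 2 [hcast]
        ring
      rw [Finset.sum_congr rfl key, Finset.sum_sub_distrib, ← Finset.mul_sum]
      have reidx : ∑ i ∈ Finset.range (j + 2),
          (i : ℝ) * ((-1 : ℝ) ^ i * (Nat.choose (j+1) i : ℝ) * ((j + 1 - i : ℕ) : ℝ) ^ m)
          = - (((j:ℝ)+1) * ∑ i ∈ Finset.range (j + 1),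
              (-1 : ℝ) ^ i * (Nat.choose j i : ℝ) * ((j - i : ℕ) : ℝ) ^ m) := by
        rw [Finset.sum_range_succ']
        simp only [Nat.cast_zero, zero_mul, add_zero]
        rw [Finset.mul_sum, ← Finset.sum_neg_distrib]
        apply Finset.sum_congr rfl
        intro i hi
        have hchoose : (i + 1) * Nat.choose (j+1) (i+1) = (j+1) * Nat.choose j i := by
          rw [mul_comm]
          exact (Nat.add_one_mul_choose_eq j i).symm
        have hc : ((i:ℝ) + 1) * (Nat.choose (j+1) (i+1) : ℝ) = ((j:ℝ)+1) * (Nat.choose j i : ℝ) := by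
          have := congrArg (Nat.cast : ℕ → ℝ) hchoose
          push_cast at this
          linarith [this]
        have hsub : (j + 1 - (i + 1) : ℕ) = (j - i : ℕ) := by omega
        rw [hsub, pow_succ]
        push_cast
        linear_combination (-(-1:ℝ)^i * ((j - i : ℕ):ℝ)^m) * hc
      rw [reidx, sub_neg_eq_add]
      have e1 := ih (j+1)
      have e2 := ih j
      rw [show j + 2 = (j+1) + 1 from rfl, e1, e2]
      have hst : st (m+1) (j+1) = (j+1) * st m (j+1) + st m j := rfl
      rw [hst, Nat.factorial_succ]
      push_cast
      ring
lemma K_eq_st (m j : ℕ) : K m j = (st m j : ℝ) := by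
  rw [K, sum_eq_st]
  have h : (Nat.factorial j : ℝ) ≠ 0 := Nat.cast_ne_zero.mpr (Nat.factorial_ne_zero j)
  field_simp

noncomputable def Bb (m : ℕ) : ℝ := ∑ j ∈ Finset.Icc 1 m, (st m j : ℝ)
noncomputable def Gn (m : ℕ) : ℝ := ∑ j ∈ Finset.Icc 1 m, (st m j : ℝ) / ((j:ℝ)+1)
noncomputable def Gm (m : ℕ) : ℝ := Gn m / Bb m

lemma B_eq (m : ℕ) : B m = Bb m := by
  unfold B Bb; exact Finset.sum_congr rfl fun j _ => K_eq_st m j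

lemma st_one (m : ℕ) (hm : 1 ≤ m) : 1 ≤ st m 1 := by
  have := le_st 1 le_rfl (m - 1)
  simpa [show 1 + (m-1) = m by omega] using this

lemma Bb_pos (m : ℕ) (hm : 1 ≤ m) : 1 ≤ Bb m := by
  have h1 : (1:ℝ) ≤ (st m 1 : ℝ) := by exact_mod_cast st_one m hm
  have := Finset.single_le_sum (f := fun j => (st m j : ℝ))
    (fun j _ => by positivity) (Finset.mem_Icc.mpr ⟨le_rfl, hm⟩)
  exact h1.trans this

lemma Gn_nonneg (m : ℕ) : 0 ≤ Gn m := Finset.sum_nonneg fun j _ => by positivity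

lemma Gn_le_half (m : ℕ) : Gn m ≤ Bb m / 2 := by
  rw [Bb, Finset.sum_div]
  apply Finset.sum_le_sum
  intro j hj
  have hj1 : 1 ≤ j := (Finset.mem_Icc.mp hj).1
  have : (2:ℝ) ≤ (j:ℝ) + 1 := by
    have : (1:ℝ) ≤ (j:ℝ) := by exact_mod_cast hj1
    linarith
  exact div_le_div_of_nonneg_left (by positivity) two_pos this

lemma Gm_nonneg (m : ℕ) (hm : 1 ≤ m) : 0 ≤ Gm m :=
  div_nonneg (Gn_nonneg m) (by linarith [Bb_pos m hm])

lemma Gm_le_half (m : ℕ) (hm : 1 ≤ m) : Gm m ≤ 1/2 := by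
  have hb := Bb_pos m hm
  rw [Gm, div_le_iff₀ (by linarith)]
  calc Gn m ≤ Bb m / 2 := Gn_le_half m
    _ = 1/2 * Bb m := by ring

lemma F_eq (n s : ℕ) (h : 1 ≤ n - s) : F n s = 1 - Gm (n - s) := by
  set m := n - s with hm
  have hb : (0:ℝ) < Bb m := by linarith [Bb_pos m h]
  have hsum : ∑ j ∈ Finset.Icc 1 m, f n s j = 1 := by
    unfold f
    rw [← Finset.sum_div, ← hm, ← B, B_eq, div_self (ne_of_gt hb)]
  have hG : ∑ j ∈ Finset.Icc 1 m, f n s j / ((j:ℝ)+1) = Gm m := by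
    unfold f Gm Gn
    rw [← hm, B_eq, Finset.sum_div]
    apply Finset.sum_congr rfl
    intro j _
    rw [K_eq_st]
    ring
  have : F n s = ∑ j ∈ Finset.Icc 1 m, (f n s j - f n s j / ((j:ℝ)+1)) := by
    rw [F, ← hm]
    apply Finset.sum_congr rfl
    intro j hj
    have : ((j:ℝ)+1) ≠ 0 := by positivity
    field_simp
    ring
  rw [this, Finset.sum_sub_distrib, hsum, hG]

lemma sumf_eq (n s : ℕ) (h : 1 ≤ n - s) :
    ∑ j ∈ Finset.Icc 1 (n - s), f n s j / ((j:ℝ)+1) = Gm (n - s) := by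
  unfold f Gm Gn
  rw [B_eq, Finset.sum_div]
  apply Finset.sum_congr rfl
  intro j _
  rw [K_eq_st]
  ring

lemma v_eq (a c : ℝ) (n s : ℕ) (h1 : 1 ≤ s) (h2 : s < n) :
    v a c n s = (a - c)^2 * (Gm (n-s))^2 / (1 + Gm (n-s))^2 := by
  have hm : 1 ≤ n - s := by omega
  rw [v, if_neg (by omega), if_neg (by omega), F_eq n s hm, sumf_eq n s hm]
  ring_nf

lemma Bb_ge (m k : ℕ) (h1 : 1 ≤ k) (h2 : k ≤ m) : ((k:ℝ))^(m-k) ≤ Bb m := by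
  have h3 : k + (m - k) = m := by omega
  have h4 : (k:ℕ)^(m-k) ≤ st m k := by
    have := le_st k h1 (m - k); rwa [h3] at this
  have h5 : (st m k : ℝ) ≤ Bb m := by
    apply Finset.single_le_sum (f := fun j => (st m j : ℝ)) (fun j _ => by positivity)
    exact Finset.mem_Icc.mpr ⟨h1, h2⟩
  calc ((k:ℝ))^(m-k) = ((k^(m-k) : ℕ) : ℝ) := by push_cast; ring
    _ ≤ (st m k : ℝ) := by exact_mod_cast h4
    _ ≤ Bb m := h5

-- the key size estimate on Bb
lemma Bb_large (m : ℕ) (hm : 2^44 ≤ m) :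
    (((6 * Nat.sqrt m + 6 : ℕ) : ℝ) + 1)^(m+3) ≤ Bb m := by
  set sq := Nat.sqrt m with hsq
  have hm' : (2:ℝ)^44 ≤ (m:ℝ) := by exact_mod_cast hm
  have hmpos : (0:ℝ) < m := by positivity
  set L := Real.log m with hL
  have hlog2l : (0.6931471803:ℝ) < Real.log 2 := Real.log_two_gt_d9
  have hlog2u : Real.log 2 < 0.6931471808 := Real.log_two_lt_d9
  -- L ≥ 30
  have hL30 : 30 ≤ L := by
    have : Real.log (2^44) ≤ L := Real.log_le_log (by positivity) hm'
    rw [Real.log_pow] at this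
    push_cast at this
    nlinarith
  -- √m facts
  have hsqrt_pos : (0:ℝ) < Real.sqrt m := Real.sqrt_pos.mpr hmpos
  have hsqm : Real.sqrt m * Real.sqrt m = m := Real.mul_self_sqrt (le_of_lt hmpos)
  have h221 : (2:ℝ)^21 ≤ Real.sqrt m := by
    rw [show ((2:ℝ)^21) = Real.sqrt ((2^21)^2) from (Real.sqrt_sq (by positivity)).symm]
    apply Real.sqrt_le_sqrt
    nlinarith
  -- L ≤ m / 2^19
  have hLsmall : L ≤ (m:ℝ) / 2^19 := by
    have h1 : L = 2 * Real.log (Real.sqrt m) := by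
      rw [Real.log_sqrt (le_of_lt hmpos)]; ring
    have h2 : Real.log (Real.sqrt m) ≤ Real.sqrt m - 1 :=
      Real.log_le_sub_one_of_pos hsqrt_pos
    have h3 : (2:ℝ)^20 * Real.sqrt m ≤ m := by nlinarith
    nlinarith
  -- natural sqrt vs real sqrt
  have hnat_sq : (sq:ℝ) ≤ Real.sqrt m := by
    have h1 : (sq * sq : ℕ) ≤ m := by simpa [pow_two] using Nat.sqrt_le' m
    have : (sq:ℝ) * (sq:ℝ) ≤ (m:ℝ) := by exact_mod_cast h1
    nlinarith [Real.sqrt_nonneg (m:ℝ), hsqm]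
  -- bound on log of t+1
  have ht1 : ((6 * sq + 6 : ℕ) : ℝ) + 1 ≤ 13 * Real.sqrt m := by
    push_cast
    nlinarith
  have htpos : (0:ℝ) < ((6 * sq + 6 : ℕ) : ℝ) + 1 := by positivity
  have hlogt : Real.log (((6 * sq + 6 : ℕ) : ℝ) + 1) ≤ 2.78 + L / 2 := by
    have h1 : Real.log (((6 * sq + 6 : ℕ) : ℝ) + 1) ≤ Real.log (13 * Real.sqrt m) :=
      Real.log_le_log htpos ht1
    have h2 : Real.log (13 * Real.sqrt m) = Real.log 13 + L / 2 := by
      rw [Real.log_mul (by norm_num) (ne_of_gt hsqrt_pos), Real.log_sqrt (le_of_lt hmpos)]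
    have h3 : Real.log 13 ≤ 2.78 := by
      have : Real.log 13 ≤ Real.log (2^4) := Real.log_le_log (by norm_num) (by norm_num)
      rw [Real.log_pow] at this
      push_cast at this
      nlinarith
    linarith
  -- the Stirling-term lower bound
  set k := m / 3 with hk
  have hk1 : 1 ≤ k := by
    have : 3 ≤ m := le_trans (by norm_num) hm
    omega
  have hkm : k ≤ m := Nat.div_le_self m 3
  have hBbk := Bb_ge m k hk1 hkm
  have hBbpos : (0:ℝ) < Bb m := by linarith [Bb_pos m (le_trans (by norm_num) hm)]
  have hk4 : (m:ℝ)/4 ≤ (k:ℝ) := by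
    have h1 : m = 3 * k + m % 3 := (Nat.div_add_mod m 3).symm ▸ by omega
    have h2 : m % 3 < 3 := Nat.mod_lt m (by norm_num)
    have h3 : (m:ℝ) ≤ 3 * (k:ℝ) + 2 := by exact_mod_cast by omega
    nlinarith
  have hk3 : (k:ℝ) ≤ (m:ℝ)/3 := Nat.cast_div_le
  have hkpos : (0:ℝ) < k := by
    have : (1:ℝ) ≤ (k:ℝ) := by exact_mod_cast hk1
    linarith
  have hlogk : L - 1.39 ≤ Real.log k := by
    have h1 : Real.log ((m:ℝ)/4) ≤ Real.log k := Real.log_le_log (by positivity) hk4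
    have h2 : Real.log ((m:ℝ)/4) = L - Real.log 4 := by
      rw [Real.log_div (ne_of_gt hmpos) (by norm_num)]
    have h3 : Real.log 4 ≤ 1.39 := by
      have : Real.log 4 = 2 * Real.log 2 := by
        rw [show (4:ℝ) = 2^2 by norm_num, Real.log_pow]; push_cast; ring
      nlinarith
    linarith
  have hcast : ((m - k : ℕ) : ℝ) = (m:ℝ) - (k:ℝ) := by
    push_cast [Nat.cast_sub hkm]; ring
  have hlogBb : ((m:ℝ) - (k:ℝ)) * (L - 1.39) ≤ Real.log (Bb m) := by
    have h1 : Real.log ((k:ℝ)^(m-k)) ≤ Real.log (Bb m) :=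
      Real.log_le_log (by positivity) hBbk
    rw [Real.log_pow, hcast] at h1
    have h2 : (0:ℝ) ≤ (m:ℝ) - (k:ℝ) := by linarith
    have h3 : ((m:ℝ) - (k:ℝ)) * (L - 1.39) ≤ ((m:ℝ) - (k:ℝ)) * Real.log k :=
      mul_le_mul_of_nonneg_left hlogk h2
    linarith
  -- final comparison via logs
  have hfin : Real.log ((((6 * sq + 6 : ℕ) : ℝ) + 1)^(m+3)) ≤ Real.log (Bb m) := by
    rw [Real.log_pow]
    have h1 : ((m+3:ℕ):ℝ) * Real.log (((6 * sq + 6 : ℕ) : ℝ) + 1) ≤ ((m:ℝ)+3) * (2.78 + L/2) := by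
      have hc : ((m+3:ℕ):ℝ) = (m:ℝ)+3 := by push_cast; ring
      rw [hc]
      exact mul_le_mul_of_nonneg_left hlogt (by positivity)
    have h2 : ((m:ℝ)+3) * (2.78 + L/2) ≤ ((m:ℝ) - (k:ℝ)) * (L - 1.39) := by
      have hmk : 2*(m:ℝ)/3 ≤ (m:ℝ) - (k:ℝ) := by linarith
      nlinarith [hL30, hLsmall, hm']
    linarith
  have := (Real.log_le_log_iff (by positivity) hBbpos).mp hfin
  exact this

lemma Gm_sq_le (m : ℕ) (hm : 2^44 ≤ m) : (Gm m)^2 ≤ 1/(8*(m:ℝ)) := by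
  set sq := Nat.sqrt m with hsq
  set t := 6 * sq + 6 with ht
  have hsq7 : 7 ≤ sq := by
    rw [hsq]
    exact Nat.le_sqrt.mpr (le_trans (by norm_num) hm)
  have hsqsq : sq * sq ≤ m := by simpa [pow_two] using Nat.sqrt_le' m
  have htm : t + 1 ≤ m := by
    have h7 : 7 * sq ≤ sq * sq := Nat.mul_le_mul_right sq hsq7
    omega
  have hm1 : 1 ≤ m := le_trans (by norm_num) hm
  have hBbpos : (0:ℝ) < Bb m := by linarith [Bb_pos m hm1]
  -- split the sum
  have hGnsplit : Gn m = (∑ j ∈ Finset.Icc 1 t, (st m j : ℝ) / ((j:ℝ)+1))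
      + ∑ j ∈ Finset.Ioc t m, (st m j : ℝ) / ((j:ℝ)+1) := by
    rw [Gn, show Finset.Icc 1 m = Finset.Ioc 0 m from by rw [← Finset.Icc_add_one_left_eq_Ioc, zero_add],
      show Finset.Icc 1 t = Finset.Ioc 0 t from by rw [← Finset.Icc_add_one_left_eq_Ioc, zero_add]]
    exact (Finset.sum_Ioc_consecutive _ (by omega) (by omega)).symm
  have hA : ∑ j ∈ Finset.Icc 1 t, (st m j : ℝ) / ((j:ℝ)+1) ≤ ((t:ℝ)+1)^(m+1) := by
    have hterm : ∀ j ∈ Finset.Icc 1 t, (st m j : ℝ) / ((j:ℝ)+1) ≤ ((t:ℝ)+1)^m := by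
      intro j hj
      have hjt : j ≤ t := (Finset.mem_Icc.mp hj).2
      have h1 : (st m j : ℝ) / ((j:ℝ)+1) ≤ (st m j : ℝ) :=
        div_le_self (by positivity) (by linarith [show (0:ℝ) ≤ (j:ℝ) from Nat.cast_nonneg j])
      have h2 : (st m j : ℕ) ≤ (t+1)^m :=
        le_trans (st_le m j) (Nat.pow_le_pow_left (by omega) m)
      have h3 : (st m j : ℝ) ≤ ((t:ℝ)+1)^m := by exact_mod_cast h2
      linarith
    calc ∑ j ∈ Finset.Icc 1 t, (st m j : ℝ) / ((j:ℝ)+1)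
        ≤ ∑ j ∈ Finset.Icc 1 t, ((t:ℝ)+1)^m := Finset.sum_le_sum hterm
      _ = (t:ℝ) * ((t:ℝ)+1)^m := by
          rw [Finset.sum_const, Nat.card_Icc]
          simp [nsmul_eq_mul]
      _ ≤ ((t:ℝ)+1) * ((t:ℝ)+1)^m := by
          have : (0:ℝ) ≤ ((t:ℝ)+1)^m := by positivity
          nlinarith
      _ = ((t:ℝ)+1)^(m+1) := by ring
  have hB2 : ∑ j ∈ Finset.Ioc t m, (st m j : ℝ) / ((j:ℝ)+1) ≤ Bb m / ((t:ℝ)+2) := by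
    have hterm : ∀ j ∈ Finset.Ioc t m, (st m j : ℝ) / ((j:ℝ)+1) ≤ (st m j : ℝ) / ((t:ℝ)+2) := by
      intro j hj
      have hjt : t < j := (Finset.mem_Ioc.mp hj).1
      have : ((t:ℝ)+2) ≤ ((j:ℝ)+1) := by
        have : (t:ℝ) + 1 ≤ (j:ℝ) := by exact_mod_cast hjt
        linarith
      exact div_le_div_of_nonneg_left (by positivity) (by positivity) this
    calc ∑ j ∈ Finset.Ioc t m, (st m j : ℝ) / ((j:ℝ)+1)
        ≤ ∑ j ∈ Finset.Ioc t m, (st m j : ℝ) / ((t:ℝ)+2) := Finset.sum_le_sum hterm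
      _ = (∑ j ∈ Finset.Ioc t m, (st m j : ℝ)) / ((t:ℝ)+2) := by rw [Finset.sum_div]
      _ ≤ Bb m / ((t:ℝ)+2) := by
          have hsub : Finset.Ioc t m ⊆ Finset.Icc 1 m := by
            intro j hj
            have := Finset.mem_Ioc.mp hj
            exact Finset.mem_Icc.mpr ⟨by omega, this.2⟩
          rw [Bb]
          exact (div_le_div_iff_of_pos_right (by positivity)).mpr
            (Finset.sum_le_sum_of_subset_of_nonneg hsub (fun j _ _ => Nat.cast_nonneg _))
  -- combine
  have hBig := Bb_large m hm
  have hcast_t : ((t:ℕ):ℝ) = ((6 * sq + 6 : ℕ) : ℝ) := by rw [ht]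
  have hBig' : ((t:ℝ)+1)^(m+3) ≤ Bb m := by
    rw [hcast_t]; exact hBig
  have ht2 : ((t:ℝ)+2) ≤ ((t:ℝ)+1)^2 := by
    have : (1:ℝ) ≤ (t:ℝ) := by exact_mod_cast (by omega : 1 ≤ t)
    nlinarith
  have hA2 : ((t:ℝ)+1)^(m+1) ≤ Bb m / ((t:ℝ)+2) := by
    rw [le_div_iff₀ (by positivity)]
    calc ((t:ℝ)+1)^(m+1) * ((t:ℝ)+2) ≤ ((t:ℝ)+1)^(m+1) * ((t:ℝ)+1)^2 :=
          mul_le_mul_of_nonneg_left ht2 (by positivity)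
      _ = ((t:ℝ)+1)^(m+3) := by ring
      _ ≤ Bb m := hBig'
  have hGm2 : Gm m ≤ 2 / ((t:ℝ)+2) := by
    rw [Gm, div_le_iff₀ hBbpos]
    have : Gn m ≤ 2 * (Bb m / ((t:ℝ)+2)) := by
      rw [hGnsplit]; linarith
    calc Gn m ≤ 2 * (Bb m / ((t:ℝ)+2)) := this
      _ = 2 / ((t:ℝ)+2) * Bb m := by ring
  have hGmnn : 0 ≤ Gm m := div_nonneg
    (Finset.sum_nonneg (fun j _ => by positivity)) (le_of_lt hBbpos)
  have hsq32 : 32 * (m:ℝ) ≤ ((t:ℝ)+2)^2 := by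
    have h1 : m < (sq + 1) * (sq + 1) := by simpa [pow_two] using Nat.lt_succ_sqrt' m
    have h2 : (m:ℝ) ≤ ((sq:ℝ)+1) * ((sq:ℝ)+1) := by exact_mod_cast le_of_lt h1
    have h3 : ((t:ℝ)+2) = 6*((sq:ℝ)+1) + 2 := by push_cast [ht]; ring
    nlinarith [Nat.cast_nonneg (α := ℝ) sq]
  have hmposR : (0:ℝ) < m := by positivity
  calc (Gm m)^2 ≤ (2/((t:ℝ)+2))^2 := by
        apply pow_le_pow_left₀ hGmnn hGm2
    _ = 4 / ((t:ℝ)+2)^2 := by rw [div_pow]; norm_num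
    _ ≤ 4 / (32 * (m:ℝ)) := by
        apply div_le_div_of_nonneg_left (by norm_num) (by positivity) hsq32
    _ = 1 / (8 * (m:ℝ)) := by ring

lemma main_ineq (n s : ℕ) (h1 : 1 ≤ s) (h2 : s < n) (hn : 2^46 ≤ n) :
    (Gm (n-s))^2 / (1 + Gm (n-s))^2 ≤ (s:ℝ) / (4*(n:ℝ)) := by
  set m := n - s with hm
  have hm1 : 1 ≤ m := by omega
  have hG0 := Gm_nonneg m hm1
  have hGhalf := Gm_le_half m hm1
  have h1G : (0:ℝ) < (1 + Gm m)^2 := by nlinarith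
  have hnR : (0:ℝ) < (n:ℝ) := by
    have : 1 ≤ n := by omega
    exact_mod_cast Nat.pos_of_ne_zero (by omega)
  have hsR : (1:ℝ) ≤ (s:ℝ) := by exact_mod_cast h1
  by_cases hcase : 4 * n ≤ 9 * s
  · have hA : (Gm m)^2 / (1 + Gm m)^2 ≤ 1/9 := by
      rw [div_le_iff₀ h1G]
      nlinarith
    have hB : (1:ℝ)/9 ≤ (s:ℝ)/(4*(n:ℝ)) := by
      rw [div_le_div_iff₀ (by norm_num) (by positivity)]
      have : (4:ℝ) * (n:ℝ) ≤ 9 * (s:ℝ) := by exact_mod_cast hcase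
      linarith
    linarith
  · push_neg at hcase
    have hm44 : 2^44 ≤ m := by omega
    have h8m : 4 * n ≤ 8 * m := by omega
    have hsq := Gm_sq_le m hm44
    have hmR : (0:ℝ) < (m:ℝ) := by exact_mod_cast Nat.pos_of_ne_zero (by omega)
    calc (Gm m)^2 / (1 + Gm m)^2 ≤ (Gm m)^2 := by
          apply div_le_self (sq_nonneg _)
          nlinarith
      _ ≤ 1/(8*(m:ℝ)) := hsq
      _ ≤ 1/(4*(n:ℝ)) := by
          apply div_le_div_of_nonneg_left (by norm_num) (by positivity)
          exact_mod_cast h8m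
      _ ≤ (s:ℝ)/(4*(n:ℝ)) := by
          rw [div_le_div_iff₀ (by positivity) (by positivity)]
          nlinarith

/-- there is `N₀` such that for all `n ≥ N₀` the equal-split allocation
`x i = (a-c)²/(4n)` is a core allocation of `(Fin n, v^n)`, so the core is nonempty:
it is an allocation (sums to `v^n(n)`) and `Σ_{i∈S} x i = |S|·(a-c)²/(4n) ≥ v^n(|S|)`
for every nonempty coalition `S`. -/
theorem stmt4 (a c : ℝ) (hc : 0 < c) (hca : c < a) :
    ∃ N₀ : ℕ, ∀ n : ℕ, N₀ ≤ n →
      (∑ _i : Fin n, (a - c) ^ 2 / (4 * (n : ℝ)) = v a c n n) ∧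
      (∀ S : Finset (Fin n), S.Nonempty →
        ∑ _i ∈ S, (a - c) ^ 2 / (4 * (n : ℝ)) = (S.card : ℝ) * (a - c) ^ 2 / (4 * (n : ℝ)) ∧
        v a c n S.card ≤ (S.card : ℝ) * (a - c) ^ 2 / (4 * (n : ℝ))) := by
  refine ⟨2^46, fun n hn => ?_⟩
  have hn1 : 1 ≤ n := le_trans (by norm_num) hn
  have hnR : (0:ℝ) < (n:ℝ) := by exact_mod_cast Nat.pos_of_ne_zero (by omega)
  have hsub : (0:ℝ) < a - c := sub_pos.mpr hca
  have hac2 : (0:ℝ) < (a-c)^2 := by positivity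
  constructor
  · rw [Finset.sum_const, Finset.card_univ, Fintype.card_fin, v, if_pos rfl, nsmul_eq_mul]
    field_simp
  · intro S hS
    have hs1 : 1 ≤ S.card := Finset.Nonempty.card_pos hS
    have hsn : S.card ≤ n := by
      simpa using Finset.card_le_card (Finset.subset_univ S)
    refine ⟨by rw [Finset.sum_const, nsmul_eq_mul]; ring, ?_⟩
    by_cases hcase : S.card = n
    · rw [hcase, v, if_pos rfl]
      apply le_of_eq
      field_simp
    · have hlt : S.card < n := lt_of_le_of_ne hsn hcase
      rw [v_eq a c n S.card hs1 hlt]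
      have key := main_ineq n S.card hs1 hlt hn
      calc (a-c)^2 * (Gm (n - S.card))^2 / (1 + Gm (n - S.card))^2
          = (a-c)^2 * ((Gm (n - S.card))^2 / (1 + Gm (n - S.card))^2) := by ring
        _ ≤ (a-c)^2 * ((S.card:ℝ)/(4*(n:ℝ))) := by
            exact mul_le_mul_of_nonneg_left key (le_of_lt hac2)
        _ = (S.card:ℝ) * (a-c)^2 / (4*(n:ℝ)) := by ring
end

section
/- Let n ≥ 2 be an integer and a > c > 0 reals. Define the γ-characteristic function by v_γ^n(s) = (a-c)²/(n-s+2)² for 1 ≤ s ≤ n-1 and v_γ^n(n) = (a-c)²/4. Then every core allocation of the uniform-distribution game (Fin n, v^n) is a core allocation of (Fin n, v_γ^n); that is, the core of (N,v) is a subset of the γ-core. -/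
noncomputable def A (m j : ℕ) : ℝ :=
  ∑ i ∈ Finset.range (j + 1), (-1 : ℝ) ^ i * (Nat.choose j i : ℝ) * ((j - i : ℕ) : ℝ) ^ m

lemma K_eq (m j : ℕ) : K m j = A m j / (Nat.factorial j : ℝ) := by
  rw [K, A, one_div, inv_mul_eq_div]

lemma A_zero (j : ℕ) : A 0 j = if j = 0 then 1 else 0 := by
  have h := Int.alternating_sum_range_choose (n := j)
  have h' : ∑ i ∈ Finset.range (j+1), (-1:ℝ)^i * (j.choose i : ℝ) = if j = 0 then 1 else 0 := by
    have h2 := congrArg (fun z : ℤ => (z : ℝ)) h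
    push_cast at h2
    simpa using h2
  rw [A]
  simpa using h' 

lemma A_rec (m j : ℕ) :
    A (m+1) (j+1) = ((j:ℝ)+1) * A m (j+1) + ((j:ℝ)+1) * A m j := by
  have key : ∀ i ∈ Finset.range (j+2),
      (-1:ℝ)^i * ((j+1).choose i : ℝ) * ((j+1-i : ℕ):ℝ)^(m+1)
      = ((j:ℝ)+1) * ((-1:ℝ)^i * ((j+1).choose i : ℝ) * ((j+1-i : ℕ):ℝ)^m)
        - (i:ℝ) * ((-1:ℝ)^i * ((j+1).choose i : ℝ) * ((j+1-i : ℕ):ℝ)^m) := by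
    intro i hi
    have hij : i ≤ j+1 := Nat.lt_succ_iff.mp (Finset.mem_range.mp hi)
    have hc : ((j+1-i : ℕ):ℝ) = (j:ℝ) + 1 - (i:ℝ) := by
      rw [Nat.cast_sub hij]; push_cast; ring
    rw [pow_succ, hc]
    ring
  have h1 : A (m+1) (j+1) = ((j:ℝ)+1) * A m (j+1)
      - ∑ i ∈ Finset.range (j+2), (i:ℝ) * ((-1:ℝ)^i * ((j+1).choose i : ℝ) * ((j+1-i:ℕ):ℝ)^m) := by
    rw [A, Finset.sum_congr rfl key, Finset.sum_sub_distrib, ← Finset.mul_sum]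
    rfl
  have h2 : ∑ i ∈ Finset.range (j+2), (i:ℝ) * ((-1:ℝ)^i * ((j+1).choose i : ℝ) * ((j+1-i:ℕ):ℝ)^m)
      = -(((j:ℝ)+1) * A m j) := by
    rw [Finset.sum_range_succ']
    simp only [Nat.cast_zero, zero_mul, add_zero]
    rw [A, Finset.mul_sum, ← Finset.sum_neg_distrib]
    apply Finset.sum_congr rfl
    intro i hi
    have hch : ((i:ℝ)+1) * (((j+1).choose (i+1)) : ℝ) = ((j:ℝ)+1) * (j.choose i : ℝ) := by
      have h3 : ((j+1) * j.choose i : ℕ) = ((j+1).choose (i+1) * (i+1) : ℕ) :=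
        Nat.add_one_mul_choose_eq j i
      have h4 : ((j:ℝ)+1) * (j.choose i:ℝ) = (((j+1).choose (i+1)):ℝ) * ((i:ℝ)+1) := by
        exact_mod_cast h3
      linear_combination -h4
    have hsub : (j + 1 - (i+1) : ℕ) = j - i := by omega
    rw [hsub, pow_succ]
    push_cast
    linear_combination (-(-1:ℝ)^i * ((j-i:ℕ):ℝ)^m) * hch
  rw [h1, h2]
  ring


lemma K_rec (m j : ℕ) : K (m+1) (j+1) = ((j:ℝ)+1) * K m (j+1) + K m j := by
  rw [K_eq, K_eq, K_eq, A_rec]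
  have h : (Nat.factorial (j+1) : ℝ) = ((j:ℝ)+1) * (Nat.factorial j : ℝ) := by
    rw [Nat.factorial_succ]; push_cast; ring
  have h1 : (Nat.factorial j : ℝ) ≠ 0 := Nat.cast_ne_zero.mpr (Nat.factorial_ne_zero j)
  have h2 : ((j:ℝ)+1) ≠ 0 := by positivity
  rw [h]
  field_simp

lemma K_nonneg : ∀ m j, 0 ≤ K m j := by
  intro m
  induction m with
  | zero =>
    intro j
    rw [K_eq, A_zero]
    split <;> positivity
  | succ m ih =>
    intro j
    cases j with
    | zero =>
      rw [K_eq]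
      simp [A]
    | succ j =>
      rw [K_rec]
      have hj : (0:ℝ) ≤ (j:ℝ) + 1 := by positivity
      have := ih (j+1)
      have := ih j
      positivity

lemma K_one (m : ℕ) (hm : 1 ≤ m) : K m 1 = 1 := by
  rw [K_eq]
  have hA : A m 1 = 1 := by
    rw [A, Finset.sum_range_succ, Finset.sum_range_one]
    norm_num [zero_pow (by omega : m ≠ 0)]
  rw [hA]
  simp [Nat.factorial]

lemma B_ge_one (m : ℕ) (hm : 1 ≤ m) : 1 ≤ B m := by
  rw [B]
  have h1 : (1:ℕ) ∈ Finset.Icc 1 m := by simp [hm]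
  calc (1:ℝ) = K m 1 := (K_one m hm).symm
    _ ≤ ∑ j ∈ Finset.Icc 1 m, K m j :=
      Finset.single_le_sum (fun j _ => K_nonneg m j) h1

lemma B_pos (m : ℕ) (hm : 1 ≤ m) : 0 < B m := lt_of_lt_of_le one_pos (B_ge_one m hm)

lemma f_nonneg (n s j : ℕ) (h : 1 ≤ n - s) : 0 ≤ f n s j :=
  div_nonneg (K_nonneg _ _) (B_pos _ h).le

lemma sum_f (n s : ℕ) (h : 1 ≤ n - s) :
    ∑ j ∈ Finset.Icc 1 (n-s), f n s j = 1 := by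
  simp only [f]
  rw [← Finset.sum_div, ← B, div_self (B_pos _ h).ne']

lemma F_nonneg (n s : ℕ) (h : 1 ≤ n - s) : 0 ≤ F n s := by
  rw [F]
  apply Finset.sum_nonneg
  intro j hj
  have := f_nonneg n s j h
  positivity

lemma F_le (n s : ℕ) (h : 1 ≤ n - s) :
    F n s ≤ ((n-s : ℕ):ℝ) / (((n-s:ℕ):ℝ) + 1) := by
  rw [F]
  have hM : (1:ℝ) ≤ ((n-s:ℕ):ℝ) := by exact_mod_cast h
  calc ∑ j ∈ Finset.Icc 1 (n-s), (j:ℝ) * f n s j / ((j:ℝ)+1)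
      ≤ ∑ j ∈ Finset.Icc 1 (n-s), f n s j * (((n-s:ℕ):ℝ)/(((n-s:ℕ):ℝ)+1)) := by
        apply Finset.sum_le_sum
        intro j hj
        obtain ⟨hj1, hj2⟩ := Finset.mem_Icc.mp hj
        have hf := f_nonneg n s j h
        have hjm : (j:ℝ) ≤ ((n-s:ℕ):ℝ) := Nat.cast_le.mpr hj2
        have hjj : (j:ℝ)/((j:ℝ)+1) ≤ ((n-s:ℕ):ℝ)/(((n-s:ℕ):ℝ)+1) := by
          rw [div_le_div_iff₀ (by positivity) (by positivity)]
          nlinarith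
        calc (j:ℝ) * f n s j / ((j:ℝ)+1) = f n s j * ((j:ℝ)/((j:ℝ)+1)) := by ring
          _ ≤ f n s j * (((n-s:ℕ):ℝ)/(((n-s:ℕ):ℝ)+1)) :=
              mul_le_mul_of_nonneg_left hjj hf
    _ = ((n-s:ℕ):ℝ)/(((n-s:ℕ):ℝ)+1) := by
        rw [← Finset.sum_mul, sum_f n s h, one_mul]

lemma sum_f_div (n s : ℕ) (h : 1 ≤ n - s) :
    ∑ j ∈ Finset.Icc 1 (n-s), f n s j / ((j:ℝ)+1) = 1 - F n s := by
  have hc : ∀ j ∈ Finset.Icc 1 (n-s),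
      f n s j / ((j:ℝ)+1) = f n s j - (j:ℝ) * f n s j/((j:ℝ)+1) := by
    intro j _
    have hj : ((j:ℝ)+1) ≠ 0 := by positivity
    field_simp
    ring
  rw [Finset.sum_congr rfl hc, Finset.sum_sub_distrib, sum_f n s h, F]


lemma v_lower (n s : ℕ) (hs1 : 1 ≤ s) (hs2 : s + 1 ≤ n) (a c : ℝ) (hca : c < a) :
    (a - c) ^ 2 / ((n:ℝ) - (s:ℝ) + 2) ^ 2 ≤ v a c n s := by
  have hsn : s ≠ n := by omega
  have hs0 : s ≠ 0 := by omega
  have hm : 1 ≤ n - s := by omega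
  rw [v, if_neg hsn, if_neg hs0, sum_f_div n s hm]
  set t := F n s with ht
  set M := ((n - s : ℕ) : ℝ) with hMdef
  have hM1 : (1:ℝ) ≤ M := by rw [hMdef]; exact_mod_cast hm
  have ht0 : 0 ≤ t := F_nonneg n s hm
  have ht1 : t ≤ M / (M + 1) := F_le n s hm
  have hcast : (n:ℝ) - (s:ℝ) + 2 = M + 2 := by
    rw [hMdef, Nat.cast_sub (by omega : s ≤ n)]
  have ht' : t * (M + 1) ≤ M := by
    rw [le_div_iff₀ (by positivity : (0:ℝ) < M + 1)] at ht1
    exact ht1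
  have h1t : 0 < 1 - t := by nlinarith
  have h2t : 0 < 2 - t := by linarith
  have hkey : 2 - t ≤ (1 - t) * (M + 2) := by nlinarith
  have hsq : (2 - t) ^ 2 ≤ ((1 - t) * (M + 2)) ^ 2 := by nlinarith
  have hR : (a-c)^2 * ((1-t)/(2-t)^2) * (1-t) = (a-c)^2 * (1-t)^2 / (2-t)^2 := by
    ring
  rw [hcast, hR, div_le_div_iff₀ (by positivity) (by positivity)]
  nlinarith [mul_le_mul_of_nonneg_left hsq (sq_nonneg (a - c))]


/-- every core allocation of the uniform-distribution game `(Fin n, v^n)`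
is a core allocation of the γ-game with `v_γ^n(s) = (a-c)²/(n-s+2)²` for
`1 ≤ s ≤ n-1` and `v_γ^n(n) = (a-c)²/4`: the core of `(N,v)` refines the γ-core. -/
theorem stmt13 (n : ℕ) (hn : 2 ≤ n) (a c : ℝ) (hc : 0 < c) (hca : c < a)
    (vγ : ℕ → ℝ)
    (hvγ : ∀ s : ℕ, 1 ≤ s → s ≤ n - 1 →
      vγ s = (a - c) ^ 2 / ((n : ℝ) - (s : ℝ) + 2) ^ 2)
    (hvγn : vγ n = (a - c) ^ 2 / 4) :
    ∀ x : Fin n → ℝ,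
      ((∑ i, x i = v a c n n) ∧
        ∀ S : Finset (Fin n), S.Nonempty → v a c n S.card ≤ ∑ i ∈ S, x i) →
      ((∑ i, x i = vγ n) ∧
        ∀ S : Finset (Fin n), S.Nonempty → vγ S.card ≤ ∑ i ∈ S, x i) := by

  rintro x ⟨hsum, hcore⟩
  have hvn : v a c n n = (a - c) ^ 2 / 4 := by rw [v, if_pos rfl]
  have hx : ∑ i, x i = vγ n := by rw [hvγn, ← hvn]; exact hsum
  refine ⟨hx, ?_⟩
  intro S hS
  have hcard_le : S.card ≤ n := by
    simpa using S.card_le_univ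
  have hcard1 : 1 ≤ S.card := hS.card_pos
  by_cases hcn : S.card = n
  · have hU : S = Finset.univ := by
      apply Finset.card_eq_iff_eq_univ S |>.mp
      simp [hcn]
    rw [hcn, hU]
    exact le_of_eq hx.symm
  · have hs2 : S.card ≤ n - 1 := by omega
    rw [hvγ S.card hcard1 hs2]
    calc (a - c) ^ 2 / ((n : ℝ) - (S.card : ℝ) + 2) ^ 2
        ≤ v a c n S.card := v_lower n S.card hcard1 (by omega) a c hca
      _ ≤ ∑ i ∈ S, x i := hcore S hS
end
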